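/- Let φ be an absolute norm on ℝ². For every lattice point i = (i₁,i₂) ∈ ℤ² with i₁, i₂ ≥ 0, the inequality φ(i) + φ(i + (1,1)) ≤ φ(i + (1,0)) + φ(i + (0,1)) holds. -/
import Mathlib


def IsNorm2 (φ : ℝ × ℝ → ℝ) : Prop :=
  (∀ x y : ℝ × ℝ, φ (x + y) ≤ φ x + φ y) ∧
  (∀ (c : ℝ) (x : ℝ × ℝ), φ (c • x) = |c| * φ x) ∧
  (∀ x : ℝ × ℝ, φ x = 0 ↔ x = 0)

def IsAbsolute (φ : ℝ × ℝ → ℝ) : Prop :=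
  ∀ x : ℝ × ℝ, φ x = φ (|x.1|, |x.2|)

lemma key_submod (φ : ℝ × ℝ → ℝ) (hn : IsNorm2 φ) (a b : ℝ) (ha : 0 ≤ a) (hb : 0 < b) :
    φ (a, b) + φ (a + 1, b + 1) ≤ φ (a + 1, b) + φ (a, b + 1) := by
  obtain ⟨htri, hhom, _⟩ := hn
  set g : ℝ → ℝ := fun t => φ (t, 1) with hg
  have hgconv : ConvexOn ℝ Set.univ g := by
    refine ⟨convex_univ, ?_⟩
    intro x _ y _ s t hs ht hst
    have h1 : ((s • x + t • y, (1:ℝ)) : ℝ × ℝ) = s • ((x, 1) : ℝ × ℝ) + t • ((y, 1) : ℝ × ℝ) := by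
      simp [Prod.ext_iff, smul_eq_mul]
      linarith
    calc g (s • x + t • y) = φ (s • ((x, 1) : ℝ × ℝ) + t • ((y, 1) : ℝ × ℝ)) := by
          rw [hg]; simp only []; rw [h1]
      _ ≤ φ (s • ((x, 1) : ℝ × ℝ)) + φ (t • ((y, 1) : ℝ × ℝ)) := htri _ _
      _ = s • g x + t • g y := by
          rw [hhom, hhom, abs_of_nonneg hs, abs_of_nonneg ht]; simp [smul_eq_mul, hg]
  have hscale : ∀ c : ℝ, 0 < c → ∀ t : ℝ, φ (t, c) = c * g (t / c) := by
    intro c hc t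
    have h1 : ((t, c) : ℝ × ℝ) = c • ((t / c, 1) : ℝ × ℝ) := by
      simp [Prod.ext_iff, smul_eq_mul]
      field_simp
    rw [h1, hhom, abs_of_pos hc]
  have hb1 : (0:ℝ) < b + 1 := by linarith
  set u : ℝ := a / (b + 1) with hu
  set v : ℝ := (a + 1) / (b + 1) with hv
  set u' : ℝ := a / b with hu'
  set v' : ℝ := (a + 1) / b with hv'
  have huv : u < v := by rw [hu, hv, div_lt_div_iff₀ hb1 hb1]; nlinarith
  have huv' : u' < v' := by rw [hu', hv', div_lt_div_iff₀ hb hb]; nlinarith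
  have huu' : u ≤ u' := by rw [hu, hu', div_le_div_iff₀ hb1 hb]; nlinarith
  have hvv' : v ≤ v' := by rw [hv, hv', div_le_div_iff₀ hb1 hb]; nlinarith
  have huv'2 : u < v' := lt_of_le_of_lt huu' huv'
  -- slope monotonicity
  have step1 : (g v - g u) / (v - u) ≤ (g v' - g u) / (v' - u) :=
    hgconv.secant_mono (Set.mem_univ u) (Set.mem_univ v) (Set.mem_univ v')
      huv.ne' huv'2.ne' hvv'
  have step2 : (g u - g v') / (u - v') ≤ (g u' - g v') / (u' - v') :=
    hgconv.secant_mono (Set.mem_univ v') (Set.mem_univ u) (Set.mem_univ u')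
      huv'2.ne huv'.ne huu'
  have heq : (g v' - g u) / (v' - u) = (g u - g v') / (u - v') := by
    rw [← neg_div_neg_eq]; ring_nf
  have hslope : (g v - g u) / (v - u) ≤ (g u' - g v') / (u' - v') := by
    rw [heq] at step1; linarith
  have hd1 : v - u = 1 / (b + 1) := by rw [hu, hv, div_sub_div_same]; ring_nf
  have hd2 : u' - v' = -(1 / b) := by rw [hu', hv', div_sub_div_same]; ring_nf
  have e1 : (g v - g u) / (v - u) = (b + 1) * g v - (b + 1) * g u := by
    rw [hd1, one_div, div_eq_mul_inv, inv_inv]; ring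
  have e2 : (g u' - g v') / (u' - v') = b * g v' - b * g u' := by
    rw [hd2, div_neg, one_div, div_eq_mul_inv, inv_inv]; ring
  have p1 : φ (a, b + 1) = (b + 1) * g u := hscale _ hb1 a
  have p2 : φ (a + 1, b + 1) = (b + 1) * g v := hscale _ hb1 (a + 1)
  have p3 : φ (a, b) = b * g u' := hscale _ hb a
  have p4 : φ (a + 1, b) = b * g v' := hscale _ hb (a + 1)
  rw [e1, e2] at hslope
  linarith [hslope]

lemma swap_norm (φ : ℝ × ℝ → ℝ) (hn : IsNorm2 φ) :
    IsNorm2 (fun x : ℝ × ℝ => φ (x.2, x.1)) := by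
  obtain ⟨htri, hhom, hzero⟩ := hn
  refine ⟨fun x y => ?_, fun c x => ?_, fun x => ?_⟩
  · have h : ((x + y).2, (x + y).1) = ((x.2, x.1) : ℝ × ℝ) + (y.2, y.1) := rfl
    simpa [h] using htri (x.2, x.1) (y.2, y.1)
  · have h : ((c • x).2, (c • x).1) = c • ((x.2, x.1) : ℝ × ℝ) := rfl
    simpa [h] using hhom c (x.2, x.1)
  · simp only []
    rw [hzero]
    constructor
    · intro h
      have h1 := congrArg Prod.fst h
      have h2 := congrArg Prod.snd h
      simp at h1 h2
      exact Prod.ext h2 h1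
    · rintro rfl; rfl

theorem absolute_norm_lattice_submodular (φ : ℝ × ℝ → ℝ)
    (hn : IsNorm2 φ) (ha : IsAbsolute φ) :
    ∀ i : ℤ × ℤ, 0 ≤ i.1 → 0 ≤ i.2 →
      φ ((i.1 : ℝ), (i.2 : ℝ)) + φ ((i.1 : ℝ) + 1, (i.2 : ℝ) + 1) ≤
        φ ((i.1 : ℝ) + 1, (i.2 : ℝ)) + φ ((i.1 : ℝ), (i.2 : ℝ) + 1) := by
  intro i h1 h2
  set a : ℝ := (i.1 : ℝ) with haa
  set b : ℝ := (i.2 : ℝ) with hbb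
  have ha0 : 0 ≤ a := by rw [haa]; exact_mod_cast h1
  have hb0 : 0 ≤ b := by rw [hbb]; exact_mod_cast h2
  rcases hb0.lt_or_eq with hb | hb
  · exact key_submod φ hn a b ha0 hb
  · rcases ha0.lt_or_eq with hap | hap
    · have := key_submod (fun x : ℝ × ℝ => φ (x.2, x.1)) (swap_norm φ hn) b a hb0 hap
      simp only [] at this
      linarith
    · -- a = 0, b = 0
      obtain ⟨htri, hhom, hzero⟩ := hn
      rw [← hap, ← hb]
      have h00 : φ (0, 0) = 0 := (hzero _).mpr (by simp [Prod.ext_iff])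
      have h11 : φ (1, 1) ≤ φ (1, 0) + φ (0, 1) := by
        simpa using htri ((1:ℝ), (0:ℝ)) ((0:ℝ), (1:ℝ))
      norm_num
      show φ ((0:ℝ), (0:ℝ)) + φ ((1:ℝ), (1:ℝ)) ≤ φ (1, 0) + φ (0, 1)
      linarith
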